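/- Let n ≥ 1 and let f₁,…,fₙ, g₁,…,gₙ be homogeneous polynomials of degree 2 and N, M homogeneous polynomials of degree 3 in ℂ[x₁,…,xₙ] satisfying gᵢ(f₁,…,fₙ) = N·xᵢ and fᵢ(g₁,…,gₙ) = M·xᵢ for all i. Let F, G : ℂⁿ → ℂⁿ be the evaluation maps of the f's and g's, and suppose B_G is a bilinear form on ℂⁿ such that dM_y(v) = B_G(G(y), v) for all y, v ∈ ℂⁿ. Define j_f(x) = N(x)⁻¹·F(x) and j_g(y) = M(y)⁻¹·G(y) on the loci N ≠ 0 and M ≠ 0 respectively. Then for every x with N(x) ≠ 0, the map j_g is differentiable at j_f(x) and its derivative there is the linear map v ↦ dG_{F(x)}(v) − B_G(x,v)·x, where dG_{F(x)} is the derivative of the polynomial map G at the point F(x). -/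

import Mathlib

open MvPolynomial

private lemma eval_smul_homog {n m : ℕ}
    {p : MvPolynomial (Fin n) ℂ} (hp : p.IsHomogeneous m) (c : ℂ) (z : Fin n → ℂ) :
    eval (c • z) p = c ^ m * eval z p := by
  rw [eval_eq, eval_eq, Finset.mul_sum]
  refine Finset.sum_congr rfl fun d hd => ?_
  have hdeg : Finsupp.degree d = m := by
    rw [Finsupp.degree_eq_weight_one]
    exact hp (mem_support_iff.mp hd)
  have hdeg' : ∑ i ∈ d.support, d i = m := hdeg
  have : ∏ i ∈ d.support, (c • z) i ^ d i = c ^ m * ∏ i ∈ d.support, z i ^ d i := by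
    simp only [Pi.smul_apply, smul_eq_mul, mul_pow, Finset.prod_mul_distrib,
      Finset.prod_pow_eq_pow_sum, hdeg']
  rw [this]; ring

private lemma pderiv_homog {n m : ℕ}
    {p : MvPolynomial (Fin n) ℂ} (hp : p.IsHomogeneous m) (j : Fin n) :
    (pderiv j p).IsHomogeneous (m - 1) := by
  classical
  rw [p.as_sum, map_sum]
  refine IsHomogeneous.sum _ _ _ fun d hd => ?_
  rw [pderiv_monomial]
  by_cases h0 : d j = 0
  · simp [h0, isHomogeneous_zero]
  · refine isHomogeneous_monomial _ ?_
    have hdeg : Finsupp.degree d = m := by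
      rw [Finsupp.degree_eq_weight_one]
      exact hp (mem_support_iff.mp hd)
    have hle : Finsupp.single j 1 ≤ d := by
      rw [Finsupp.single_le_iff]; omega
    have hadd : (d - Finsupp.single j 1) + Finsupp.single j 1 = d :=
      tsub_add_cancel_of_le hle
    have h1 : Finsupp.degree (Finsupp.single j (1 : ℕ)) = 1 := by
      simp [Finsupp.degree_single]
    have h2 : Finsupp.degree (d - Finsupp.single j 1) + Finsupp.degree (Finsupp.single j (1:ℕ))
        = Finsupp.degree d := by
      conv_rhs => rw [← hadd]
      simp only [Finsupp.degree_eq_weight_one, map_add]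
    have hj : 1 ≤ m := le_trans (by omega : 1 ≤ d j) (hdeg ▸ Finsupp.le_degree j d)
    omega

private lemma hasFDerivAt_eval_mv {n : ℕ} (p : MvPolynomial (Fin n) ℂ) (x : Fin n → ℂ) :
    HasFDerivAt (fun y => eval y p)
      (∑ j : Fin n, eval x (pderiv j p) •
        (ContinuousLinearMap.proj j : (Fin n → ℂ) →L[ℂ] ℂ)) x := by
  induction p using MvPolynomial.induction_on with
  | C a =>
      simp only [eval_C, pderiv_C, map_zero]
      have hz : (∑ j : Fin n, (0:ℂ) • (ContinuousLinearMap.proj j : (Fin n → ℂ) →L[ℂ] ℂ)) = 0 :=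
        ContinuousLinearMap.ext fun v => by simp
      rw [hz]
      exact hasFDerivAt_const (𝕜 := ℂ) a x
  | add p q hp hq =>
      have h := hp.add hq
      have he : (∑ j : Fin n, eval x (pderiv j (p + q)) •
            (ContinuousLinearMap.proj j : (Fin n → ℂ) →L[ℂ] ℂ))
          = (∑ j : Fin n, eval x (pderiv j p) • (ContinuousLinearMap.proj j : (Fin n → ℂ) →L[ℂ] ℂ))
            + ∑ j : Fin n, eval x (pderiv j q) • (ContinuousLinearMap.proj j : (Fin n → ℂ) →L[ℂ] ℂ) := by
        rw [← Finset.sum_add_distrib]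
        refine Finset.sum_congr rfl fun j _ => ?_
        rw [map_add, map_add]
        exact add_smul (eval x (pderiv j p)) (eval x (pderiv j q))
          (ContinuousLinearMap.proj j : (Fin n → ℂ) →L[ℂ] ℂ)
      rw [he]
      rw [show (fun y : Fin n → ℂ => eval y (p + q)) = (fun y => eval y p) + (fun y => eval y q) from
        funext fun y => by simp]
      exact h
  | mul_X p i hp =>
      have hXi : HasFDerivAt (fun y : Fin n → ℂ => y i)
          (ContinuousLinearMap.proj i : (Fin n → ℂ) →L[ℂ] ℂ) x :=
        hasFDerivAt_apply (𝕜 := ℂ) i x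
      have h := hp.smul hXi
      have hfun : (fun y : Fin n → ℂ => eval y (p * X i)) = fun y => eval y p • y i := by
        funext y; simp [smul_eq_mul]
      rw [hfun]
      refine h.congr_fderiv (Eq.symm ?_)
      refine ContinuousLinearMap.ext fun v => ?_
      simp only [ContinuousLinearMap.sum_apply, ContinuousLinearMap.smul_apply,
        ContinuousLinearMap.add_apply, ContinuousLinearMap.proj_apply,
        ContinuousLinearMap.smulRight_apply, smul_eq_mul]
      have key : ∀ j : Fin n, eval x (pderiv j (p * X i)) * v j
          = eval x (pderiv j p) * v j * x i
            + (if j = i then eval x p * v i else 0) := by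
        intro j
        rcases eq_or_ne j i with rfl | hji
        · simp [pderiv_mul]; ring
        · simp [pderiv_mul, pderiv_X_of_ne (Ne.symm hji), hji]; ring
      calc ∑ j : Fin n, eval x (pderiv j (p * X i)) * v j
          = ∑ j : Fin n, (eval x (pderiv j p) * v j * x i
              + (if j = i then eval x p * v i else 0)) :=
            Finset.sum_congr rfl fun j _ => key j
        _ = (∑ j : Fin n, eval x (pderiv j p) * v j) * x i + eval x p * v i := by
            rw [Finset.sum_add_distrib, ← Finset.sum_mul, Finset.sum_ite_eq']
            simp
        _ = _ := by ring

/-- If `B_G` is a bilinear form with `dM_y(v) = B_G(G(y), v)`, then for every `x`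
with `N(x) ≠ 0` the inversion `j_g` is differentiable at `j_f(x)` with derivative
`v ↦ dG_{F(x)}(v) − B_G(x,v)·x`. -/
theorem stmt8 (n : ℕ) (hn : 1 ≤ n)
    (f g : Fin n → MvPolynomial (Fin n) ℂ)
    (N M : MvPolynomial (Fin n) ℂ)
    (hf : ∀ i, (f i).IsHomogeneous 2) (hg : ∀ i, (g i).IsHomogeneous 2)
    (hN : N.IsHomogeneous 3) (hM : M.IsHomogeneous 3)
    (hgf : ∀ i, bind₁ f (g i) = N * X i)
    (hfg : ∀ i, bind₁ g (f i) = M * X i)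
    (F G jf jg : (Fin n → ℂ) → (Fin n → ℂ))
    (hF : ∀ x, F x = fun i => eval x (f i))
    (hG : ∀ y, G y = fun i => eval y (g i))
    (hjf : ∀ x, jf x = (eval x N)⁻¹ • F x)
    (hjg : ∀ y, jg y = (eval y M)⁻¹ • G y)
    (B : (Fin n → ℂ) →ₗ[ℂ] (Fin n → ℂ) →ₗ[ℂ] ℂ)
    (hB : ∀ y v : Fin n → ℂ,
      (∑ j : Fin n, v j * eval y (pderiv j M)) = B (G y) v) :
    ∀ x : Fin n → ℂ, eval x N ≠ 0 →
      DifferentiableAt ℂ jg (jf x) ∧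
      ∀ v : Fin n → ℂ,
        fderiv ℂ jg (jf x) v =
          (fun i => ∑ j : Fin n, v j * eval (F x) (pderiv j (g i))) - B x v • x := by
  intro x hNx
  classical
  have evalbind : ∀ (z : Fin n → ℂ) (h : Fin n → MvPolynomial (Fin n) ℂ)
      (φ : MvPolynomial (Fin n) ℂ),
      eval z (bind₁ h φ) = eval (fun i => eval z (h i)) φ := fun z h φ =>
    eval₂Hom_bind₁ (RingHom.id ℂ) z h φ
  set c : ℂ := (eval x N)⁻¹ with hc
  have hcne : c ≠ 0 := inv_ne_zero hNx
  have key1 : ∀ i, eval (F x) (g i) = eval x N * x i := by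
    intro i
    have h := congrArg (eval x) (hgf i)
    rw [evalbind, ← hF x, map_mul, eval_X] at h
    exact h
  have hxne : x ≠ 0 := by
    intro h0
    apply hNx
    have h := eval_smul_homog hN 0 x
    rw [zero_smul, ← h0] at h
    simpa using h
  obtain ⟨i₀, hi₀⟩ : ∃ i, x i ≠ 0 := by
    by_contra hall; push_neg at hall; exact hxne (funext hall)
  have hFne : F x ≠ 0 := by
    intro h0
    have h := key1 i₀
    have h2 := eval_smul_homog (hg i₀) 0 (0 : Fin n → ℂ)
    rw [zero_smul] at h2
    rw [h0, h2] at h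
    simp at h
    rcases h with h | h
    · exact hNx h
    · exact hi₀ h
  have hGFx : (fun j => eval (F x) (g j)) = eval x N • x := by
    funext j; simp [key1 j]
  have key2 : eval (F x) M = (eval x N) ^ 2 := by
    obtain ⟨i₁, hi₁⟩ : ∃ i, F x i ≠ 0 := by
      by_contra hall; push_neg at hall; exact hFne (funext hall)
    have h := congrArg (eval (F x)) (hfg i₁)
    rw [evalbind, hGFx, eval_smul_homog (hf i₁), map_mul, eval_X] at h
    have hfx : eval x (f i₁) = F x i₁ := by rw [hF]
    rw [hfx] at h
    exact (mul_right_cancel₀ hi₁ h).symm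
  set y₀ := jf x with hy₀def
  have hy₀ : y₀ = c • F x := by rw [hy₀def, hjf]
  have hMy₀ : eval y₀ M = c := by
    rw [hy₀, eval_smul_homog hM, key2, hc]
    field_simp
  have hGy₀ : (fun i => eval y₀ (g i)) = c • x := by
    funext i
    rw [hy₀, eval_smul_homog (hg i), key1 i]
    simp only [Pi.smul_apply, smul_eq_mul, hc]
    field_simp
  have hpd : ∀ i j, eval y₀ (pderiv j (g i)) = c * eval (F x) (pderiv j (g i)) := by
    intro i j
    rw [hy₀, eval_smul_homog (pderiv_homog (hg i) j)]
    norm_num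
  set DG : (Fin n → ℂ) →L[ℂ] (Fin n → ℂ) :=
    ContinuousLinearMap.pi (fun i => ∑ j : Fin n, eval y₀ (pderiv j (g i)) •
      (ContinuousLinearMap.proj j : (Fin n → ℂ) →L[ℂ] ℂ)) with hDG
  have hGd : HasFDerivAt (fun y => fun i => eval y (g i)) DG y₀ :=
    hasFDerivAt_pi.2 fun i => hasFDerivAt_eval_mv (g i) y₀
  set DM : (Fin n → ℂ) →L[ℂ] ℂ := ∑ j : Fin n, eval y₀ (pderiv j M) •
      (ContinuousLinearMap.proj j : (Fin n → ℂ) →L[ℂ] ℂ) with hDM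
  have hMd : HasFDerivAt (fun y => eval y M) DM y₀ := hasFDerivAt_eval_mv M y₀
  have hMne : eval y₀ M ≠ 0 := by rw [hMy₀]; exact hcne
  have hinv : HasFDerivAt (fun y => (eval y M)⁻¹)
      ((ContinuousLinearMap.smulRight (1 : ℂ →L[ℂ] ℂ) (-(eval y₀ M ^ 2)⁻¹)).comp DM) y₀ :=
    (hasFDerivAt_inv hMne).comp y₀ hMd
  have hjgfun : jg = fun y => (eval y M)⁻¹ • (fun i => eval y (g i)) := by
    funext y; rw [hjg, hG]
  have hL : HasFDerivAt jg
      ((eval y₀ M)⁻¹ • DG +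
        ((ContinuousLinearMap.smulRight (1 : ℂ →L[ℂ] ℂ) (-(eval y₀ M ^ 2)⁻¹)).comp DM).smulRight
          (fun i => eval y₀ (g i))) y₀ := by
    rw [hjgfun]
    exact hinv.smul hGd
  refine ⟨hL.differentiableAt, fun v => ?_⟩
  rw [hL.fderiv]
  funext i
  have hDMv : DM v = c * (B x v) := by
    have h1 : DM v = ∑ j : Fin n, v j * eval y₀ (pderiv j M) := by
      rw [hDM]
      simp only [ContinuousLinearMap.sum_apply, ContinuousLinearMap.smul_apply,
        ContinuousLinearMap.proj_apply, smul_eq_mul]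
      exact Finset.sum_congr rfl fun j _ => mul_comm _ _
    rw [h1, hB y₀ v]
    have : G y₀ = c • x := by rw [hG y₀]; exact hGy₀
    rw [this, map_smul]
    simp
  have hDGvi : DG v i = c * ∑ j : Fin n, v j * eval (F x) (pderiv j (g i)) := by
    rw [hDG]
    simp only [ContinuousLinearMap.pi_apply, ContinuousLinearMap.sum_apply,
      ContinuousLinearMap.smul_apply, ContinuousLinearMap.proj_apply, smul_eq_mul,
      Finset.mul_sum]
    exact Finset.sum_congr rfl fun j _ => by rw [hpd i j]; ring
  have hgi : eval y₀ (g i) = c * x i := by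
    have := congrFun hGy₀ i
    simpa using this
  simp only [ContinuousLinearMap.add_apply, ContinuousLinearMap.smul_apply,
    ContinuousLinearMap.smulRight_apply, ContinuousLinearMap.comp_apply,
    ContinuousLinearMap.one_apply, Pi.add_apply, Pi.smul_apply, smul_eq_mul,
    Pi.sub_apply, hMy₀, hDMv, hDGvi, hgi]
  field_simp
  ring
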